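/- Let D ⊆ GF(5)⁴ consist of the 8 vectors (±1,0,0,0), (0,±1,0,0), (0,0,±1,0), (0,0,0,±1) and the 16 vectors (±3,±3,±3,±3) (where 3 = 1/2 in GF(5)). Then |D| = 24, every vector in D has self inner product 1, and the standard inner product of any two distinct vectors of D is never equal to 1. -/

import Mathlib

set_option maxRecDepth 8000
set_option maxHeartbeats 2000000

private def L18 : Finset (Fin 4 → ZMod 5) :=
  {![1,0,0,0], ![4,0,0,0], ![0,1,0,0], ![0,4,0,0],
   ![0,0,1,0], ![0,0,4,0], ![0,0,0,1], ![0,0,0,4],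
   ![3,3,3,3], ![3,3,3,2], ![3,3,2,3], ![3,3,2,2],
   ![3,2,3,3], ![3,2,3,2], ![3,2,2,3], ![3,2,2,2],
   ![2,3,3,3], ![2,3,3,2], ![2,3,2,3], ![2,3,2,2],
   ![2,2,3,3], ![2,2,3,2], ![2,2,2,3], ![2,2,2,2]}

private lemma mem18 (v : Fin 4 → ZMod 5) :
    ((∃ i : Fin 4, v = Pi.single i 1 ∨ v = Pi.single i (-1)) ∨
      (∀ i : Fin 4, v i = 3 ∨ v i = -3)) ↔ v ∈ L18 := by
  constructor
  · rintro (⟨i, h | h⟩ | h)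
    · subst h; fin_cases i <;> decide
    · subst h; fin_cases i <;> decide
    · have hv : v = ![v 0, v 1, v 2, v 3] := by
        funext j; fin_cases j <;> rfl
      rcases h 0 with h0 | h0 <;> rcases h 1 with h1 | h1 <;>
        rcases h 2 with h2 | h2 <;> rcases h 3 with h3 | h3 <;>
        rw [hv, h0, h1, h2, h3] <;> decide
  · intro hv
    simp only [L18, Finset.mem_insert, Finset.mem_singleton] at hv
    rcases hv with h|h|h|h|h|h|h|h|h|h|h|h|h|h|h|h|h|h|h|h|h|h|h|h <;> subst h
    · exact Or.inl ⟨0, Or.inl (by decide)⟩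
    · exact Or.inl ⟨0, Or.inr (by decide)⟩
    · exact Or.inl ⟨1, Or.inl (by decide)⟩
    · exact Or.inl ⟨1, Or.inr (by decide)⟩
    · exact Or.inl ⟨2, Or.inl (by decide)⟩
    · exact Or.inl ⟨2, Or.inr (by decide)⟩
    · exact Or.inl ⟨3, Or.inl (by decide)⟩
    · exact Or.inl ⟨3, Or.inr (by decide)⟩
    all_goals exact Or.inr (by decide)

private lemma sum18 : ∀ v ∈ L18, ∑ j, v j * v j = 1 := by
  intro v hv
  simp only [L18, Finset.mem_insert, Finset.mem_singleton] at hv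
  rcases hv with h|h|h|h|h|h|h|h|h|h|h|h|h|h|h|h|h|h|h|h|h|h|h|h <;> subst h <;> decide

private lemma ip18 : ∀ v ∈ L18, ∀ w ∈ L18, v ≠ w → ∑ j, v j * w j ≠ 1 := by
  intro v hv w hw
  simp only [L18, Finset.mem_insert, Finset.mem_singleton] at hv hw
  rcases hv with h|h|h|h|h|h|h|h|h|h|h|h|h|h|h|h|h|h|h|h|h|h|h|h <;> subst h <;>
    rcases hw with h|h|h|h|h|h|h|h|h|h|h|h|h|h|h|h|h|h|h|h|h|h|h|h <;> subst h <;> decide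

theorem stmt18 :
    let D : Set (Fin 4 → ZMod 5) :=
      {v | (∃ i : Fin 4, v = Pi.single i 1 ∨ v = Pi.single i (-1)) ∨
        (∀ i : Fin 4, v i = 3 ∨ v i = -3)}
    Nat.card D = 24 ∧
    (∀ v ∈ D, ∑ j, v j * v j = 1) ∧
    (∀ v ∈ D, ∀ w ∈ D, v ≠ w → ∑ j, v j * w j ≠ 1) := by
  intro D
  have hD : D = ↑L18 := Set.ext fun v => (mem18 v).trans Finset.mem_coe.symm
  refine ⟨?_, ?_, ?_⟩
  · rw [hD, Nat.card_coe_set_eq, Set.ncard_coe_finset]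
    decide
  · intro v hv
    rw [hD, Finset.mem_coe] at hv
    exact sum18 v hv
  · intro v hv w hw
    rw [hD, Finset.mem_coe] at hv hw
    exact ip18 v hv w hw
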